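/- Let (X,d,μ) be a space of homogeneous type with μ(X) = ∞, fix x₀ ∈ X and S > 0 with μ(B(x₀,S)) > 0. With K₀ = 2K and A₀ > 1 such that μ(B(x₀, K₀r)) ≤ A₀μ(B(x₀,r)) for all r > 0, choose λ_k ∈ ℕ so that A₀^k a₀ ≤ μ(B(x₀, K₀^{λ_k} S)) < A₀^{k+1} a₀ where a₀ = μ(B(x₀,S)). Then f_j := ∑_{k=0}^j 𝟙_{B(x₀, K₀^{λ_k}S)} satisfies ‖f_j‖_{BMO(X)} ≤ c₀ with c₀ depending only on A and K (uniformly in j). -/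

import Mathlib

open MeasureTheory
open scoped ENNReal NNReal

private lemma lintegral_restrict_zero {X : Type*} [MeasurableSpace X] (μ : Measure X)
    (B : Set X) (g : X → ℝ≥0∞) (hg : ∀ y ∈ B, g y = 0) :
    ∫⁻ y, g y ∂(μ.restrict B) = 0 := by
  refine le_antisymm ?_ (zero_le)
  rw [MeasureTheory.lintegral_def]
  refine iSup₂_le fun φ hφ => ?_
  rw [SimpleFunc.lintegral]
  refine le_of_eq (Finset.sum_eq_zero fun x hx => ?_)
  rcases eq_or_ne x 0 with h | h
  · simp [h]
  · have hempty : φ ⁻¹' {x} ∩ B = ∅ := by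
      ext y
      simp only [Set.mem_inter_iff, Set.mem_preimage, Set.mem_singleton_iff,
        Set.mem_empty_iff_false, iff_false, not_and]
      intro hyx hyB
      have h1 : φ y ≤ g y := hφ y
      rw [hg y hyB, le_zero_iff] at h1
      exact h (by rw [← hyx]; exact h1)
    rw [Measure.restrict_apply (φ.measurableSet_preimage _), hempty, measure_empty, mul_zero]

private lemma iter_doubling {X : Type*} [MeasurableSpace X] (d : X → X → ℝ) (μ : Measure X)
    (A : ℝ)
    (hdoubling : ∀ (x : X) (r : ℝ), 0 < r →
      μ {y | d x y < 2 * r} ≤ ENNReal.ofReal A * μ {y | d x y < r}) :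
    ∀ (n : ℕ) (x : X) (r : ℝ), 0 < r →
      μ {y | d x y < 2 ^ n * r} ≤ (ENNReal.ofReal A) ^ n * μ {y | d x y < r} := by
  intro n
  induction n with
  | zero => intro x r hr; simp
  | succ n ih =>
    intro x r hr
    have h1 : ((2:ℝ) ^ (n+1) * r) = 2 ^ n * (2 * r) := by ring
    calc μ {y | d x y < 2 ^ (n+1) * r} = μ {y | d x y < 2 ^ n * (2 * r)} := by rw [h1]
      _ ≤ (ENNReal.ofReal A) ^ n * μ {y | d x y < 2 * r} := ih x (2*r) (by linarith)
      _ ≤ (ENNReal.ofReal A) ^ n * (ENNReal.ofReal A * μ {y | d x y < r}) :=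
          mul_le_mul_right (hdoubling x r hr) _
      _ = (ENNReal.ofReal A) ^ (n+1) * μ {y | d x y < r} := by ring

private lemma osc_bound {X : Type*} [MeasurableSpace X] (μ : Measure X) (B : Set X)
    (f : X → ℝ) (c C : ℝ) (hC : 0 ≤ C)
    (hμ0 : 0 < μ B) (hμt : μ B < ⊤) (hfnn : ∀ y, 0 ≤ f y)
    (hbound : ∫⁻ y, ENNReal.ofReal |f y - c| ∂(μ.restrict B) ≤ ENNReal.ofReal C * μ B) :
    ⨍ y in B, |f y - ⨍ z in B, f z ∂μ| ∂μ ≤ 2 * C := by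
  have hBR : 0 < (μ B).toReal := ENNReal.toReal_pos hμ0.ne' hμt.ne
  by_cases hint : Integrable f (μ.restrict B)
  · haveI : IsFiniteMeasure (μ.restrict B) := ⟨by rwa [Measure.restrict_apply_univ]⟩
    have hconst : Integrable (fun _ : X => c) (μ.restrict B) := integrable_const c
    have hfc : Integrable (fun y => |f y - c|) (μ.restrict B) := (hint.sub hconst).abs
    have hJ : ∫ y in B, |f y - c| ∂μ ≤ C * (μ B).toReal := by
      rw [integral_eq_lintegral_of_nonneg_ae
        (Filter.Eventually.of_forall fun y => abs_nonneg _) hfc.1]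
      calc (∫⁻ y, ENNReal.ofReal |f y - c| ∂(μ.restrict B)).toReal
          ≤ (ENNReal.ofReal C * μ B).toReal :=
            ENNReal.toReal_mono (ENNReal.mul_ne_top ENNReal.ofReal_ne_top hμt.ne) hbound
        _ = C * (μ B).toReal := by rw [ENNReal.toReal_mul, ENNReal.toReal_ofReal hC]
    set I : ℝ := ⨍ z in B, f z ∂μ with hI
    have hJnn : 0 ≤ ∫ y in B, |f y - c| ∂μ := integral_nonneg fun y => abs_nonneg _
    have hcI : |c - I| ≤ (μ B).toReal⁻¹ * ∫ y in B, |f y - c| ∂μ := by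
      have h1 : ∫ y in B, (f y - c) ∂μ = (∫ y in B, f y ∂μ) - c * (μ B).toReal := by
        rw [integral_sub hint hconst, integral_const, measureReal_restrict_apply_univ,
          measureReal_def, smul_eq_mul]
        ring
      have h2 : |∫ y in B, (f y - c) ∂μ| ≤ ∫ y in B, |f y - c| ∂μ := by
        simpa [Real.norm_eq_abs] using
          norm_integral_le_integral_norm (μ := μ.restrict B) (fun y => f y - c)
      have hIdef : I = (μ B).toReal⁻¹ * ∫ z in B, f z ∂μ := by
        rw [hI, setAverage_eq, smul_eq_mul, measureReal_def]
      rw [hIdef]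
      have h3 : c - (μ B).toReal⁻¹ * ∫ z in B, f z ∂μ
          = -((μ B).toReal⁻¹ * ∫ y in B, (f y - c) ∂μ) := by
        rw [h1]
        field_simp
        ring
      rw [h3, abs_neg, abs_mul, abs_of_nonneg (inv_nonneg.2 ENNReal.toReal_nonneg)]
      exact mul_le_mul_of_nonneg_left h2 (by positivity)
    have hmain : ∫ y in B, |f y - I| ∂μ ≤ 2 * (C * (μ B).toReal) := by
      have hfi : Integrable (fun y => |f y - I|) (μ.restrict B) :=
        (hint.sub (integrable_const I)).abs
      have hrhs : Integrable (fun y => |f y - c| + |c - I|) (μ.restrict B) :=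
        hfc.add (integrable_const _)
      have hmono : ∫ y in B, |f y - I| ∂μ ≤ ∫ y in B, (|f y - c| + |c - I|) ∂μ := by
        refine integral_mono hfi hrhs fun y => ?_
        have h4 : f y - I = (f y - c) + (c - I) := by ring
        rw [h4]
        exact abs_add_le _ _
      rw [integral_add hfc (integrable_const _), integral_const,
        measureReal_restrict_apply_univ, measureReal_def, smul_eq_mul] at hmono
      have h5 : (μ B).toReal * |c - I| ≤ ∫ y in B, |f y - c| ∂μ := by
        calc (μ B).toReal * |c - I|
            ≤ (μ B).toReal * ((μ B).toReal⁻¹ * ∫ y in B, |f y - c| ∂μ) :=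
              mul_le_mul_of_nonneg_left hcI hBR.le
          _ = ∫ y in B, |f y - c| ∂μ := by field_simp
      nlinarith [hJ, hmono, h5]
    rw [setAverage_eq, smul_eq_mul]
    calc (μ B).toReal⁻¹ * ∫ y in B, |f y - I| ∂μ
        ≤ (μ B).toReal⁻¹ * (2 * (C * (μ B).toReal)) :=
          mul_le_mul_of_nonneg_left hmain (by positivity)
      _ = 2 * C := by field_simp
  · have hIz : ⨍ z in B, f z ∂μ = 0 := by
      rw [setAverage_eq, integral_undef hint, smul_zero]
    simp only [hIz, sub_zero]
    have habs : ⨍ y in B, |f y| ∂μ = ⨍ y in B, f y ∂μ := by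
      congr 1
      exact funext fun y => abs_of_nonneg (hfnn y)
    rw [habs, setAverage_eq, integral_undef hint, smul_zero]
    linarith

set_option maxHeartbeats 1000000 in
/-- Lemma 6.4: on a space of homogeneous type with `μ(X) = ∞`, with `K₀ = 2K`, `A₀ > 1`
satisfying `μ(B(x₀,K₀ r)) ≤ A₀ μ(B(x₀,r))`, and `λ_k` chosen so that
`A₀^k a₀ ≤ μ(B(x₀, K₀^{λ_k} S)) < A₀^{k+1} a₀` (with `λ₀ = 0`, `a₀ = μ(B(x₀,S)) > 0`),
the functions `f_j = ∑_{k=0}^j 𝟙_{B(x₀,K₀^{λ_k} S)}` have BMO norms bounded by a constant `c₀`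
uniformly in `j`. -/
theorem bmo_indicator_sum_bound {X : Type*} [MeasurableSpace X] (d : X → X → ℝ)
    (μ : Measure X) (K A : ℝ) (hK : 1 ≤ K) (hA : 1 ≤ A)
    (hsymm : ∀ x y, d x y = d y x)
    (hpos : ∀ x y, 0 < d x y ↔ x ≠ y)
    (hself : ∀ x, d x x = 0)
    (htri : ∀ x y z, d x y ≤ K * (d x z + d z y))
    (hball : ∀ (x : X) (r : ℝ), 0 < r →
      0 < μ {y | d x y < r} ∧ μ {y | d x y < r} < ⊤)
    (hdoubling : ∀ (x : X) (r : ℝ), 0 < r →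
      μ {y | d x y < 2 * r} ≤ ENNReal.ofReal A * μ {y | d x y < r})
    (hinf : μ Set.univ = ⊤)
    (x₀ : X) (S : ℝ) (hS : 0 < S) (ha₀ : 0 < μ {y | d x₀ y < S})
    (A₀ : ℝ) (hA₀ : 1 < A₀)
    (hdb₀ : ∀ r : ℝ, 0 < r →
      μ {y | d x₀ y < (2 * K) * r} ≤ ENNReal.ofReal A₀ * μ {y | d x₀ y < r})
    (lam : ℕ → ℕ) (hlam0 : lam 0 = 0)
    (hlam : ∀ k : ℕ,
      ENNReal.ofReal (A₀ ^ k) * μ {y | d x₀ y < S} ≤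
          μ {y | d x₀ y < (2 * K) ^ lam k * S} ∧
        μ {y | d x₀ y < (2 * K) ^ lam k * S} <
          ENNReal.ofReal (A₀ ^ (k + 1)) * μ {y | d x₀ y < S}) :
    ∃ c₀ : ℝ, 0 < c₀ ∧ ∀ (j : ℕ) (x : X) (r : ℝ), 0 < r →
      ⨍ y in {y | d x y < r},
          |(∑ k ∈ Finset.range (j + 1),
              Set.indicator {z | d x₀ z < (2 * K) ^ lam k * S} (fun _ => (1 : ℝ)) y) -
            ⨍ z in {z | d x z < r},
              (∑ k ∈ Finset.range (j + 1),
                Set.indicator {w | d x₀ w < (2 * K) ^ lam k * S} (fun _ => (1 : ℝ)) z) ∂μ| ∂μ ≤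
        c₀ := by
  classical
  have hK0 : (0:ℝ) < K := lt_of_lt_of_le one_pos hK
  have hA0' : (0:ℝ) < A₀ := lt_trans one_pos hA₀
  have hApos : (0:ℝ) < A := lt_of_lt_of_le one_pos hA
  obtain ⟨n, hn⟩ : ∃ n : ℕ, ((2*K)^4 : ℝ) < 2 ^ n := pow_unbounded_of_one_lt _ one_lt_two
  have hd0 : ∀ a b, 0 ≤ d a b := by
    intro a b
    rcases eq_or_ne a b with h | h
    · rw [h, hself]
    · exact le_of_lt ((hpos a b).2 h)
  set C : ℝ := max 2 (A₀^2/(A₀-1) * A^n) with hCdef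
  have hC2 : (2:ℝ) ≤ C := le_max_left _ _
  have hC0 : (0:ℝ) ≤ C := by linarith
  refine ⟨2*C, by linarith, ?_⟩
  intro j x r hr
  obtain ⟨hμB0, hμBt⟩ := hball x r hr
  obtain ⟨ha₀0, ha₀t⟩ := hball x₀ S hS
  set B : Set X := {y | d x y < r} with hBdef
  set Q : Finset ℕ := (Finset.range (j+1)).filter
      (fun k => ¬ B ⊆ {z | d x₀ z < (2*K) ^ lam k * S}
        ∧ (B ∩ {z | d x₀ z < (2*K) ^ lam k * S}).Nonempty) with hQdef
  set c : ℝ := (((Finset.range (j+1)).filter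
      (fun k => B ⊆ {z | d x₀ z < (2*K) ^ lam k * S})).card : ℝ) with hcdef
  set tm : ℕ → Set X := fun k =>
      toMeasurable μ ({z | d x₀ z < (2*K) ^ lam k * S} ∩ B) with htmdef
  -- the measure sum bound
  have key3 : ∑ k ∈ Q, (μ.restrict B) (tm k) ≤ ENNReal.ofReal C * μ B := by
    rcases Q.eq_empty_or_nonempty with hQe | hQne
    · simp [hQe]
    · set m : ℕ := Q.min' hQne with hmdef
      set T : ℕ := Q.max' hQne with hTdef
      have hmQ : m ∈ Q := Q.min'_mem hQne
      have hTQ : T ∈ Q := Q.max'_mem hQne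
      have hmQ' := Finset.mem_filter.1 (hQdef ▸ hmQ)
      have hTQ' := Finset.mem_filter.1 (hQdef ▸ hTQ)
      obtain ⟨-, hmns, hmne⟩ := hmQ'
      obtain ⟨-, hTns, -⟩ := hTQ'
      obtain ⟨y₀, hy₀B, hy₀m⟩ := hmne
      obtain ⟨z, hzB, hzT⟩ := Set.not_subset.1 hTns
      have hzT' : (2*K) ^ lam T * S ≤ d x₀ z := not_lt.1 hzT
      have hy₀B' : d x y₀ < r := hy₀B
      have hy₀m' : d x₀ y₀ < (2*K) ^ lam m * S := hy₀m
      have hzB' : d x z < r := hzB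
      have hRm0 : 0 < (2*K) ^ lam m * S := mul_pos (pow_pos (by linarith) _) hS
      -- main chain
      have hchain : (2*K) ^ lam T * S ≤ K * ((2*K) ^ lam m * S) + 2*K^2*r := by
        have h1 : d x₀ z ≤ K * (d x₀ y₀ + d y₀ z) := htri _ _ _
        have h2 : d y₀ z ≤ K * (d y₀ x + d x z) := htri _ _ _
        have h3 : d y₀ x = d x y₀ := hsymm _ _
        have h8 : d y₀ z ≤ K * (r + r) := by
          refine h2.trans (mul_le_mul_of_nonneg_left ?_ hK0.le)
          rw [h3]
          linarith
        have h9 : d x₀ y₀ + d y₀ z ≤ (2*K) ^ lam m * S + K * (r + r) := by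
          linarith
        have h10 : d x₀ z ≤ K * ((2*K) ^ lam m * S + K * (r + r)) :=
          h1.trans (mul_le_mul_of_nonneg_left h9 hK0.le)
        nlinarith [hzT'.trans h10]
      by_cases hcase : (2*K)^2 * r ≤ K * ((2*K) ^ lam m * S)
      · -- case (i) : at most two indices
        have hK2r : (0:ℝ) ≤ K^2 * r := by positivity
        have hRT2 : (2*K) ^ lam T * S ≤ (2*K) * ((2*K) ^ lam m * S) := by
          nlinarith [hchain, hcase, hK2r]
        have hsub : {w : X | d x₀ w < (2*K) ^ lam T * S}
            ⊆ {w : X | d x₀ w < (2*K) * ((2*K) ^ lam m * S)} :=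
          fun w hw => lt_of_lt_of_le hw hRT2
        have hmt : μ {w : X | d x₀ w < (2*K) ^ lam T * S}
            ≤ ENNReal.ofReal A₀ * μ {w : X | d x₀ w < (2*K) ^ lam m * S} :=
          (measure_mono hsub).trans (hdb₀ _ hRm0)
        have hTm : T ≤ m + 1 := by
          have h1 := (hlam T).1
          have h2 := (hlam m).2
          have hlt : ENNReal.ofReal (A₀^T) * μ {y | d x₀ y < S}
              < ENNReal.ofReal (A₀^(m+2)) * μ {y | d x₀ y < S} := by
            refine lt_of_le_of_lt (h1.trans hmt) ?_
            have h4 : ENNReal.ofReal A₀ * μ {y | d x₀ y < (2*K) ^ lam m * S}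
                < ENNReal.ofReal A₀ * (ENNReal.ofReal (A₀^(m+1)) * μ {y | d x₀ y < S}) :=
              (ENNReal.mul_lt_mul_right
                (by simp [ENNReal.ofReal_pos.2 hA0', (ENNReal.ofReal_pos.2 hA0').ne'])
                ENNReal.ofReal_ne_top h2)
            refine h4.trans_le (le_of_eq ?_)
            rw [← mul_assoc, ← ENNReal.ofReal_mul hA0'.le]
            congr 2
            rw [← pow_succ']
          have hpow : A₀^T < A₀^(m+2) :=
            (ENNReal.ofReal_lt_ofReal_iff (pow_pos hA0' _)).1
              ((ENNReal.mul_left_strictMono ha₀.ne' ha₀t.ne).lt_iff_lt.1 hlt)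
          have := (pow_lt_pow_iff_right₀ hA₀).1 hpow
          omega
        have hterm : ∀ k ∈ Q, (μ.restrict B) (tm k) ≤ μ B := by
          intro k _
          refine le_trans (measure_mono (Set.subset_univ _)) ?_
          rw [Measure.restrict_apply_univ]
        have hQsub : Q ⊆ Finset.Icc m (m+1) := by
          intro k hk
          exact Finset.mem_Icc.2 ⟨Q.min'_le k hk, le_trans (Q.le_max' k hk) hTm⟩
        have hcard : (Finset.Icc m (m+1)).card = 2 := by
          rw [Nat.card_Icc]
          omega
        calc ∑ k ∈ Q, (μ.restrict B) (tm k) ≤ ∑ k ∈ Q, μ B := Finset.sum_le_sum hterm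
          _ ≤ ∑ _k ∈ Finset.Icc m (m+1), μ B := Finset.sum_le_sum_of_subset hQsub
          _ = 2 * μ B := by rw [Finset.sum_const, hcard, two_nsmul, two_mul]
          _ ≤ ENNReal.ofReal C * μ B := by
              refine mul_le_mul_left ?_ _
              rw [show (2:ℝ≥0∞) = ENNReal.ofReal 2 from (ENNReal.ofReal_ofNat 2).symm]
              exact ENNReal.ofReal_le_ofReal hC2
      · -- case (ii)
        have hcase' : K * ((2*K) ^ lam m * S) < (2*K)^2 * r := not_le.1 hcase
        have hRm4 : (2*K) ^ lam m * S < 4*K*r := by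
          have h1 : K * ((2*K) ^ lam m * S) < K * (4*K*r) := by nlinarith [hcase']
          exact lt_of_mul_lt_mul_left h1 hK0.le
        have hgeo : {w : X | d x₀ w < (2*K) ^ lam T * S} ⊆ {w : X | d x w < 2^n * r} := by
          intro w hw
          have hw' : d x₀ w < (2*K) ^ lam T * S := hw
          have h1 : d x w ≤ K * (d x x₀ + d x₀ w) := htri _ _ _
          have h2 : d x x₀ ≤ K * (d x y₀ + d y₀ x₀) := htri _ _ _
          have h3 : d y₀ x₀ = d x₀ y₀ := hsymm _ _
          have e2 : d x x₀ ≤ K * (r + (2*K) ^ lam m * S) := by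
            refine h2.trans (mul_le_mul_of_nonneg_left ?_ hK0.le)
            rw [h3]
            linarith
          have e3 : d x₀ w ≤ K * ((2*K) ^ lam m * S) + 2*K^2*r := le_trans hw'.le hchain
          show d x w < 2^n * r
          have hfin : d x w < (2*K)^4 * r := by
            have e4 : d x w ≤ K * ((K * (r + (2*K) ^ lam m * S))
                + (K * ((2*K) ^ lam m * S) + 2*K^2*r)) :=
              h1.trans (mul_le_mul_of_nonneg_left (by linarith) hK0.le)
            have hK2 : (0:ℝ) < K^2 := by positivity
            have e5 : K^2 * ((2*K) ^ lam m * S) < K^2 * (4*K*r) :=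
              mul_lt_mul_of_pos_left hRm4 hK2
            have e6 : K^2 ≤ K^4 := pow_le_pow_right₀ hK (by norm_num)
            have e7 : K^3 ≤ K^4 := pow_le_pow_right₀ hK (by norm_num)
            have e8 : K^2 * r ≤ K^4 * r := mul_le_mul_of_nonneg_right e6 hr.le
            have e9 : K^3 * r ≤ K^4 * r := mul_le_mul_of_nonneg_right e7 hr.le
            have e10 : (0:ℝ) ≤ K^4 * r := by positivity
            nlinarith [e4, e5, e8, e9, e10]
          calc d x w < (2*K)^4 * r := hfin
            _ < 2^n * r := by
                exact mul_lt_mul_of_pos_right hn hr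
        have hμT : μ {w : X | d x₀ w < (2*K) ^ lam T * S} ≤ ENNReal.ofReal (A^n) * μ B := by
          refine (measure_mono hgeo).trans ?_
          rw [ENNReal.ofReal_pow hApos.le]
          exact iter_doubling d μ A hdoubling n x r hr
        have hlow : ENNReal.ofReal (A₀^T) * μ {y | d x₀ y < S}
            ≤ ENNReal.ofReal (A^n) * μ B := (hlam T).1.trans hμT
        have hterm : ∀ k ∈ Q, (μ.restrict B) (tm k)
            ≤ ENNReal.ofReal (A₀^(k+1)) * μ {y | d x₀ y < S} := by
          intro k _
          have h0 : tm k = toMeasurable μ ({z | d x₀ z < (2*K) ^ lam k * S} ∩ B) := by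
            rw [htmdef]
          have h1 : (μ.restrict B) (tm k) ≤ μ (tm k) := by
            rw [h0, Measure.restrict_apply (measurableSet_toMeasurable _ _)]
            exact measure_mono Set.inter_subset_left
          have h2 : μ (tm k) = μ ({z | d x₀ z < (2*K) ^ lam k * S} ∩ B) := by
            rw [h0, measure_toMeasurable]
          refine h1.trans ?_
          rw [h2]
          exact (measure_mono Set.inter_subset_left).trans (hlam k).2.le
        have hgeosum : ∑ k ∈ Finset.range (T+1), A₀^(k+1) ≤ A₀^(T+2)/(A₀-1) := by
          have hA1 : (0:ℝ) < A₀ - 1 := by linarith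
          have h1 : ∑ k ∈ Finset.range (T+1), A₀^(k+1)
              = (∑ k ∈ Finset.range (T+1), A₀^k) * A₀ := by
            rw [Finset.sum_mul]
            exact Finset.sum_congr rfl fun k _ => pow_succ A₀ k
          rw [h1, geom_sum_eq (ne_of_gt hA₀), div_mul_eq_mul_div, div_le_div_iff₀ hA1 hA1]
          have hp : (0:ℝ) < A₀^(T+1) := pow_pos hA0' _
          have hq : A₀^(T+2) = A₀^(T+1) * A₀ := pow_succ A₀ (T+1)
          nlinarith [hp, hq, hA1, hA0']
        calc ∑ k ∈ Q, (μ.restrict B) (tm k)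
            ≤ ∑ k ∈ Q, ENNReal.ofReal (A₀^(k+1)) * μ {y | d x₀ y < S} :=
              Finset.sum_le_sum hterm
          _ ≤ ∑ k ∈ Finset.range (T+1), ENNReal.ofReal (A₀^(k+1)) * μ {y | d x₀ y < S} := by
              refine Finset.sum_le_sum_of_subset ?_
              intro k hk
              exact Finset.mem_range.2 (Nat.lt_succ_of_le (Q.le_max' k hk))
          _ = ENNReal.ofReal (∑ k ∈ Finset.range (T+1), A₀^(k+1)) * μ {y | d x₀ y < S} := by
              rw [← Finset.sum_mul, ENNReal.ofReal_sum_of_nonneg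
                (fun k _ => by positivity)]
          _ ≤ ENNReal.ofReal (A₀^(T+2)/(A₀-1)) * μ {y | d x₀ y < S} :=
              mul_le_mul_left (ENNReal.ofReal_le_ofReal hgeosum) _
          _ = ENNReal.ofReal (A₀^2/(A₀-1)) * (ENNReal.ofReal (A₀^T) * μ {y | d x₀ y < S}) := by
              rw [← mul_assoc, ← ENNReal.ofReal_mul (div_nonneg (by positivity) (by linarith))]
              congr 2
              rw [pow_add]
              ring
          _ ≤ ENNReal.ofReal (A₀^2/(A₀-1)) * (ENNReal.ofReal (A^n) * μ B) :=
              mul_le_mul_right hlow _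
          _ = ENNReal.ofReal (A₀^2/(A₀-1) * A^n) * μ B := by
              rw [ENNReal.ofReal_mul (div_nonneg (by positivity) (by linarith)), mul_assoc]
          _ ≤ ENNReal.ofReal C * μ B :=
              mul_le_mul_left (ENNReal.ofReal_le_ofReal (le_max_right _ _)) _
  have hbound : ∫⁻ y, ENNReal.ofReal |(∑ k ∈ Finset.range (j+1),
        Set.indicator {z | d x₀ z < (2*K) ^ lam k * S} (fun _ => (1:ℝ)) y) - c|
        ∂(μ.restrict B) ≤ ENNReal.ofReal C * μ B := by
    set U : X → ℝ≥0∞ := fun y => ∑ k ∈ Q, (tm k).indicator (fun _ => (1:ℝ≥0∞)) y with hUdef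
    set V : X → ℝ≥0∞ := fun y => if y ∈ B then 0 else ⊤ with hVdef
    have hUm : Measurable U :=
      Finset.measurable_sum _ fun k _ =>
        measurable_const.indicator (measurableSet_toMeasurable _ _)
    have hVzero : ∀ y ∈ B, V y = 0 := fun y hy => if_pos hy
    have hpt : ∀ y, ENNReal.ofReal |(∑ k ∈ Finset.range (j+1),
        Set.indicator {z | d x₀ z < (2*K) ^ lam k * S} (fun _ => (1:ℝ)) y) - c|
        ≤ U y + V y := by
      intro y
      by_cases hyB : y ∈ B
      · have hVy : V y = 0 := if_pos hyB
        rw [hVy, add_zero]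
        have hid : (∑ k ∈ Finset.range (j+1),
            Set.indicator {z | d x₀ z < (2*K) ^ lam k * S} (fun _ => (1:ℝ)) y) - c
            = ∑ k ∈ Q, Set.indicator {z | d x₀ z < (2*K) ^ lam k * S} (fun _ => (1:ℝ)) y := by
          have hsplit := Finset.sum_filter_add_sum_filter_not (Finset.range (j+1))
            (fun k => B ⊆ {z | d x₀ z < (2*K) ^ lam k * S})
            (fun k => Set.indicator {z | d x₀ z < (2*K) ^ lam k * S} (fun _ => (1:ℝ)) y)
          have hA' : ∑ k ∈ (Finset.range (j+1)).filter
              (fun k => B ⊆ {z | d x₀ z < (2*K) ^ lam k * S}),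
              Set.indicator {z | d x₀ z < (2*K) ^ lam k * S} (fun _ => (1:ℝ)) y = c := by
            have hone : ∀ k ∈ (Finset.range (j+1)).filter
                (fun k => B ⊆ {z | d x₀ z < (2*K) ^ lam k * S}),
                Set.indicator {z | d x₀ z < (2*K) ^ lam k * S} (fun _ => (1:ℝ)) y = 1 :=
              fun k hk => Set.indicator_of_mem ((Finset.mem_filter.1 hk).2 hyB) _
            rw [Finset.sum_congr rfl hone, Finset.sum_const, nsmul_eq_mul, mul_one, hcdef]
          have hB' : ∑ k ∈ (Finset.range (j+1)).filter
              (fun k => ¬ B ⊆ {z | d x₀ z < (2*K) ^ lam k * S}),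
              Set.indicator {z | d x₀ z < (2*K) ^ lam k * S} (fun _ => (1:ℝ)) y
              = ∑ k ∈ Q, Set.indicator {z | d x₀ z < (2*K) ^ lam k * S} (fun _ => (1:ℝ)) y := by
            refine (Finset.sum_subset ?_ ?_).symm
            · intro k hk
              obtain ⟨hk1, hk2, _⟩ := Finset.mem_filter.1 hk
              exact Finset.mem_filter.2 ⟨hk1, hk2⟩
            · intro k hk hkQ
              rw [hQdef] at hkQ
              obtain ⟨hk1, hk2⟩ := Finset.mem_filter.1 hk
              by_cases hyk : y ∈ {z | d x₀ z < (2*K) ^ lam k * S}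
              · exact absurd (Finset.mem_filter.2 ⟨hk1, hk2, ⟨y, hyB, hyk⟩⟩) hkQ
              · exact Set.indicator_of_notMem hyk _
          linarith [hsplit]
        rw [hid, abs_of_nonneg (Finset.sum_nonneg fun k _ =>
          Set.indicator_nonneg (fun _ _ => zero_le_one) _),
          ENNReal.ofReal_sum_of_nonneg
            (fun k _ => Set.indicator_nonneg (fun _ _ => zero_le_one) _)]
        refine Finset.sum_le_sum fun k hk => ?_
        by_cases hyk : y ∈ {z | d x₀ z < (2*K) ^ lam k * S}
        · have hmemtm : y ∈ tm k := by
            simp only [htmdef]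
            exact subset_toMeasurable μ _ ⟨hyk, hyB⟩
          rw [Set.indicator_of_mem hyk, Set.indicator_of_mem hmemtm]
          simp
        · rw [Set.indicator_of_notMem hyk]
          simp
      · have hVy : V y = ⊤ := if_neg hyB
        rw [hVy, add_top]
        exact le_top
    calc ∫⁻ y, ENNReal.ofReal |(∑ k ∈ Finset.range (j+1),
          Set.indicator {z | d x₀ z < (2*K) ^ lam k * S} (fun _ => (1:ℝ)) y) - c|
          ∂(μ.restrict B)
        ≤ ∫⁻ y, (U y + V y) ∂(μ.restrict B) := lintegral_mono hpt
      _ = (∫⁻ y, U y ∂(μ.restrict B)) + ∫⁻ y, V y ∂(μ.restrict B) :=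
          lintegral_add_left hUm _
      _ = ∑ k ∈ Q, (μ.restrict B) (tm k) := by
          rw [lintegral_restrict_zero μ B V hVzero, add_zero, hUdef,
            lintegral_finset_sum _ (fun k _ =>
              measurable_const.indicator (measurableSet_toMeasurable _ _))]
          exact Finset.sum_congr rfl fun k _ => by
            rw [lintegral_indicator_const (measurableSet_toMeasurable _ _), one_mul]
      _ ≤ ENNReal.ofReal C * μ B := key3
  exact osc_bound μ B
    (fun y => ∑ k ∈ Finset.range (j+1),
      Set.indicator {z | d x₀ z < (2*K) ^ lam k * S} (fun _ => (1:ℝ)) y)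
    c C hC0 hμB0 hμBt
    (fun y => Finset.sum_nonneg fun k _ => Set.indicator_nonneg (fun _ _ => zero_le_one) _)
    hbound
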